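/- In the Γ-shaped diagram of R-modules (with modules B₀,C₀,D₀; A₁,B₁,C₁,D₁; K₂,A₂,B₂,C₂; K₃,A₃,B₃; K₄,A₄; horizontal maps g₀,h₀; f₁,g₁,h₁; e₂,f₂,g₂; e₃,f₃; e₄; vertical maps β₀,γ₀,δ₀; α₁,β₁,γ₁; κ₂,α₂,β₂; κ₃,α₃) with all indicated squares commuting, the rows and columns exact at B₁, A₂ and at C₁, B₂, A₃, and γ₀, δ₀, e₃, e₄ injective, the quotient Ker h₀ / Im g₀ is isomorphic as an R-module to Ker κ₃ / Im κ₂. -/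

import Mathlib

/-- In the Γ-shaped diagram with rows `B₀ → C₀ → D₀`, `A₁ → B₁ → C₁ → D₁`,
`K₂ → A₂ → B₂ → C₂`, `K₃ → A₃ → B₃`, `K₄ → A₄`, commuting squares, rows and
columns exact at `B₁`, `A₂`, `C₁`, `B₂`, `A₃`, and `γ₀`, `δ₀`, `e₃`, `e₄`
injective, one has `Ker h₀ / Im g₀ ≅ Ker κ₃ / Im κ₂`. -/
theorem gamma_homology_iso {R : Type*} [Ring R]
    {B₀ C₀ D₀ A₁ B₁ C₁ D₁ K₂ A₂ B₂ C₂ K₃ A₃ B₃ K₄ A₄ : Type*}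
    [AddCommGroup B₀] [Module R B₀] [AddCommGroup C₀] [Module R C₀]
    [AddCommGroup D₀] [Module R D₀] [AddCommGroup A₁] [Module R A₁]
    [AddCommGroup B₁] [Module R B₁] [AddCommGroup C₁] [Module R C₁]
    [AddCommGroup D₁] [Module R D₁] [AddCommGroup K₂] [Module R K₂]
    [AddCommGroup A₂] [Module R A₂] [AddCommGroup B₂] [Module R B₂]
    [AddCommGroup C₂] [Module R C₂] [AddCommGroup K₃] [Module R K₃]
    [AddCommGroup A₃] [Module R A₃] [AddCommGroup B₃] [Module R B₃]
    [AddCommGroup K₄] [Module R K₄] [AddCommGroup A₄] [Module R A₄]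
    (g₀ : B₀ →ₗ[R] C₀) (h₀ : C₀ →ₗ[R] D₀)
    (f₁ : A₁ →ₗ[R] B₁) (g₁ : B₁ →ₗ[R] C₁) (h₁ : C₁ →ₗ[R] D₁)
    (e₂ : K₂ →ₗ[R] A₂) (f₂ : A₂ →ₗ[R] B₂) (g₂ : B₂ →ₗ[R] C₂)
    (e₃ : K₃ →ₗ[R] A₃) (f₃ : A₃ →ₗ[R] B₃)
    (e₄ : K₄ →ₗ[R] A₄)
    (β₀ : B₀ →ₗ[R] B₁) (γ₀ : C₀ →ₗ[R] C₁) (δ₀ : D₀ →ₗ[R] D₁)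
    (α₁ : A₁ →ₗ[R] A₂) (β₁ : B₁ →ₗ[R] B₂) (γ₁ : C₁ →ₗ[R] C₂)
    (κ₂ : K₂ →ₗ[R] K₃) (α₂ : A₂ →ₗ[R] A₃) (β₂ : B₂ →ₗ[R] B₃)
    (κ₃ : K₃ →ₗ[R] K₄) (α₃ : A₃ →ₗ[R] A₄)
    (hsq₁ : g₁ ∘ₗ β₀ = γ₀ ∘ₗ g₀)
    (hsq₂ : h₁ ∘ₗ γ₀ = δ₀ ∘ₗ h₀)
    (hsq₃ : f₂ ∘ₗ α₁ = β₁ ∘ₗ f₁)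
    (hsq₄ : g₂ ∘ₗ β₁ = γ₁ ∘ₗ g₁)
    (hsq₅ : e₃ ∘ₗ κ₂ = α₂ ∘ₗ e₂)
    (hsq₆ : f₃ ∘ₗ α₂ = β₂ ∘ₗ f₂)
    (hsq₇ : e₄ ∘ₗ κ₃ = α₃ ∘ₗ e₃)
    (hrowB₁ : LinearMap.range f₁ = LinearMap.ker g₁)
    (hcolB₁ : LinearMap.range β₀ = LinearMap.ker β₁)
    (hrowA₂ : LinearMap.range e₂ = LinearMap.ker f₂)
    (hcolA₂ : LinearMap.range α₁ = LinearMap.ker α₂)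
    (hrowC₁ : LinearMap.range g₁ = LinearMap.ker h₁)
    (hcolC₁ : LinearMap.range γ₀ = LinearMap.ker γ₁)
    (hrowB₂ : LinearMap.range f₂ = LinearMap.ker g₂)
    (hcolB₂ : LinearMap.range β₁ = LinearMap.ker β₂)
    (hrowA₃ : LinearMap.range e₃ = LinearMap.ker f₃)
    (hcolA₃ : LinearMap.range α₂ = LinearMap.ker α₃)
    (hγ₀ : Function.Injective γ₀) (hδ₀ : Function.Injective δ₀)
    (he₃ : Function.Injective e₃) (he₄ : Function.Injective e₄) :
    Nonempty (
      (↥(LinearMap.ker h₀) ⧸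
        (LinearMap.range g₀).comap (LinearMap.ker h₀).subtype)
      ≃ₗ[R]
      (↥(LinearMap.ker κ₃) ⧸
        (LinearMap.range κ₂).comap (LinearMap.ker κ₃).subtype)) := by

  classical
  have sq₁ : ∀ b, g₁ (β₀ b) = γ₀ (g₀ b) := fun b => LinearMap.congr_fun hsq₁ b
  have sq₂ : ∀ c, h₁ (γ₀ c) = δ₀ (h₀ c) := fun c => LinearMap.congr_fun hsq₂ c
  have sq₃ : ∀ a, f₂ (α₁ a) = β₁ (f₁ a) := fun a => LinearMap.congr_fun hsq₃ a
  have sq₄ : ∀ b, g₂ (β₁ b) = γ₁ (g₁ b) := fun b => LinearMap.congr_fun hsq₄ b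
  have sq₅ : ∀ k, e₃ (κ₂ k) = α₂ (e₂ k) := fun k => LinearMap.congr_fun hsq₅ k
  have sq₆ : ∀ a, f₃ (α₂ a) = β₂ (f₂ a) := fun a => LinearMap.congr_fun hsq₆ a
  have sq₇ : ∀ k, e₄ (κ₃ k) = α₃ (e₃ k) := fun k => LinearMap.congr_fun hsq₇ k
  -- existence of the chase
  have step_exists : ∀ c : C₀, h₀ c = 0 → ∃ k b a,
      g₁ b = γ₀ c ∧ f₂ a = β₁ b ∧ e₃ k = α₂ a := by
    intro c hc
    have h1 : γ₀ c ∈ LinearMap.ker h₁ := by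
      simp [LinearMap.mem_ker, sq₂ c, hc]
    rw [← hrowC₁] at h1
    obtain ⟨b, hb⟩ := h1
    have h2 : β₁ b ∈ LinearMap.ker g₂ := by
      have hγ : γ₁ (γ₀ c) = 0 := by
        have : γ₀ c ∈ LinearMap.ker γ₁ := hcolC₁ ▸ ⟨c, rfl⟩
        exact LinearMap.mem_ker.mp this
      simp [LinearMap.mem_ker, sq₄ b, hb, hγ]
    rw [← hrowB₂] at h2
    obtain ⟨a, ha⟩ := h2
    have h3 : α₂ a ∈ LinearMap.ker f₃ := by
      have hβ : β₂ (β₁ b) = 0 := by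
        have : β₁ b ∈ LinearMap.ker β₂ := hcolB₂ ▸ ⟨b, rfl⟩
        exact LinearMap.mem_ker.mp this
      simp [LinearMap.mem_ker, sq₆ a, ha, hβ]
    rw [← hrowA₃] at h3
    obtain ⟨k, hk⟩ := h3
    exact ⟨k, b, a, hb, ha, hk⟩
  -- the chase lands in ker κ₃
  have step_k : ∀ (k : K₃) (a : A₂), e₃ k = α₂ a → κ₃ k = 0 := by
    intro k a h
    apply he₄
    have hα : α₃ (α₂ a) = 0 := by
      have : α₂ a ∈ LinearMap.ker α₃ := hcolA₃ ▸ ⟨a, rfl⟩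
      exact LinearMap.mem_ker.mp this
    rw [map_zero, sq₇ k, h, hα]
  -- well-definedness core
  have step_zero : ∀ (k : K₃) (b : B₁) (a : A₂), g₁ b = 0 → f₂ a = β₁ b →
      e₃ k = α₂ a → k ∈ LinearMap.range κ₂ := by
    intro k b a hb ha hk
    have h1 : b ∈ LinearMap.range f₁ := hrowB₁ ▸ LinearMap.mem_ker.mpr hb
    obtain ⟨a₁, ha₁⟩ := h1
    have h2 : a - α₁ a₁ ∈ LinearMap.ker f₂ := by
      simp [LinearMap.mem_ker, map_sub, ha, sq₃ a₁, ha₁]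
    rw [← hrowA₂] at h2
    obtain ⟨k₂, hk₂⟩ := h2
    have hαα : α₂ (α₁ a₁) = 0 := by
      have : α₁ a₁ ∈ LinearMap.ker α₂ := hcolA₂ ▸ ⟨a₁, rfl⟩
      exact LinearMap.mem_ker.mp this
    refine ⟨k₂, he₃ ?_⟩
    rw [sq₅ k₂, hk₂, map_sub, hαα, sub_zero, hk]
  -- kernel description
  have step_mem : ∀ (c : C₀) (k : K₃) (b : B₁) (a : A₂), g₁ b = γ₀ c →
      f₂ a = β₁ b → e₃ k = α₂ a → k ∈ LinearMap.range κ₂ →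
      c ∈ LinearMap.range g₀ := by
    intro c k b a hb ha hk hkr
    obtain ⟨k₂, hk₂⟩ := hkr
    have h1 : a - e₂ k₂ ∈ LinearMap.ker α₂ := by
      have : e₃ k = α₂ (e₂ k₂) := by rw [← hk₂, sq₅]
      simp [LinearMap.mem_ker, map_sub, ← this, hk]
    rw [← hcolA₂] at h1
    obtain ⟨a₁, ha₁⟩ := h1
    have hfe : f₂ (e₂ k₂) = 0 := by
      have : e₂ k₂ ∈ LinearMap.ker f₂ := hrowA₂ ▸ ⟨k₂, rfl⟩
      exact LinearMap.mem_ker.mp this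
    have h2 : b - f₁ a₁ ∈ LinearMap.ker β₁ := by
      have : f₂ (α₁ a₁) = β₁ b - f₂ (e₂ k₂) := by
        rw [ha₁, map_sub, ha]
      simp only [LinearMap.mem_ker, map_sub, ← sq₃ a₁, this, hfe, sub_zero, sub_self]
    rw [← hcolB₁] at h2
    obtain ⟨b₀, hb₀⟩ := h2
    have hgf : g₁ (f₁ a₁) = 0 := by
      have : f₁ a₁ ∈ LinearMap.ker g₁ := hrowB₁ ▸ ⟨a₁, rfl⟩
      exact LinearMap.mem_ker.mp this
    refine ⟨b₀, hγ₀ ?_⟩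
    rw [← sq₁, hb₀, map_sub, hgf, sub_zero, hb]
  -- surjectivity chase
  have step_surj : ∀ k : K₃, κ₃ k = 0 → ∃ c b a, h₀ c = 0 ∧
      g₁ b = γ₀ c ∧ f₂ a = β₁ b ∧ e₃ k = α₂ a := by
    intro k hκ
    have h1 : e₃ k ∈ LinearMap.ker α₃ := by
      have := sq₇ k
      rw [hκ, map_zero] at this
      exact LinearMap.mem_ker.mpr this.symm
    rw [← hcolA₃] at h1
    obtain ⟨a, ha⟩ := h1
    have h2 : f₂ a ∈ LinearMap.ker β₂ := by
      have hfe : f₃ (e₃ k) = 0 := by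
        have : e₃ k ∈ LinearMap.ker f₃ := hrowA₃ ▸ ⟨k, rfl⟩
        exact LinearMap.mem_ker.mp this
      rw [← ha, sq₆ a] at hfe
      exact LinearMap.mem_ker.mpr hfe
    rw [← hcolB₂] at h2
    obtain ⟨b, hb⟩ := h2
    have h3 : g₁ b ∈ LinearMap.ker γ₁ := by
      have hgf : g₂ (f₂ a) = 0 := by
        have : f₂ a ∈ LinearMap.ker g₂ := hrowB₂ ▸ ⟨a, rfl⟩
        exact LinearMap.mem_ker.mp this
      rw [← hb, sq₄ b] at hgf
      exact LinearMap.mem_ker.mpr hgf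
    rw [← hcolC₁] at h3
    obtain ⟨c, hc⟩ := h3
    have hc0 : h₀ c = 0 := by
      apply hδ₀
      have hhg : h₁ (g₁ b) = 0 := by
        have : g₁ b ∈ LinearMap.ker h₁ := hrowC₁ ▸ ⟨b, rfl⟩
        exact LinearMap.mem_ker.mp this
      rw [← hc, sq₂ c] at hhg
      rw [map_zero, hhg]
    exact ⟨c, b, a, hc0, hc.symm, hb.symm, ha.symm⟩
  -- independence of choices
  have indep : ∀ (c : C₀) (k k' : K₃) (b b' : B₁) (a a' : A₂),
      g₁ b = γ₀ c → f₂ a = β₁ b → e₃ k = α₂ a →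
      g₁ b' = γ₀ c → f₂ a' = β₁ b' → e₃ k' = α₂ a' →
      k - k' ∈ LinearMap.range κ₂ := by
    intro c k k' b b' a a' hb ha hk hb' ha' hk'
    exact step_zero (k - k') (b - b') (a - a')
      (by rw [map_sub, hb, hb', sub_self])
      (by rw [map_sub, map_sub, ha, ha'])
      (by rw [map_sub, map_sub, hk, hk'])
  choose kf bf af hbf haf hkf using step_exists
  set N₂ := (LinearMap.range κ₂).comap (LinearMap.ker κ₃).subtype with hN₂
  have mk_eq : ∀ (x y : LinearMap.ker κ₃), (x : K₃) - (y : K₃) ∈ LinearMap.range κ₂ →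
      (Submodule.Quotient.mk (p := N₂) x = Submodule.Quotient.mk y) := by
    intro x y h
    rw [Submodule.Quotient.eq]
    exact h
  let φ : ↥(LinearMap.ker h₀) →ₗ[R]
      (↥(LinearMap.ker κ₃) ⧸ N₂) :=
    { toFun := fun c => Submodule.Quotient.mk
        ⟨kf c.1 c.2, step_k _ _ (hkf c.1 c.2)⟩
      map_add' := by
        intro x y
        have hxy : (x + y : LinearMap.ker h₀).1 = x.1 + y.1 := rfl
        have h := indep (x.1 + y.1)
          (kf (x.1 + y.1) (x + y).2) (kf x.1 x.2 + kf y.1 y.2)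
          (bf (x.1 + y.1) (x + y).2) (bf x.1 x.2 + bf y.1 y.2)
          (af (x.1 + y.1) (x + y).2) (af x.1 x.2 + af y.1 y.2)
          (hbf _ _) (haf _ _) (hkf _ _)
          (by rw [map_add, map_add]; exact congrArg₂ (· + ·) (hbf _ _) (hbf _ _))
          (by rw [map_add, map_add]; exact congrArg₂ (· + ·) (haf _ _) (haf _ _))
          (by rw [map_add, map_add]; exact congrArg₂ (· + ·) (hkf _ _) (hkf _ _))
        have := mk_eq ⟨kf (x.1 + y.1) (x + y).2, step_k _ _ (hkf _ _)⟩
          (⟨kf x.1 x.2, step_k _ _ (hkf _ _)⟩ + ⟨kf y.1 y.2, step_k _ _ (hkf _ _)⟩) h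
        simpa [Submodule.Quotient.mk_add] using this
      map_smul' := by
        intro r x
        have h := indep (r • x.1)
          (kf (r • x.1) (r • x).2) (r • kf x.1 x.2)
          (bf (r • x.1) (r • x).2) (r • bf x.1 x.2)
          (af (r • x.1) (r • x).2) (r • af x.1 x.2)
          (hbf _ _) (haf _ _) (hkf _ _)
          (by rw [map_smul, map_smul]; exact congrArg (r • ·) (hbf _ _))
          (by rw [map_smul, map_smul]; exact congrArg (r • ·) (haf _ _))
          (by rw [map_smul, map_smul]; exact congrArg (r • ·) (hkf _ _))
        have := mk_eq ⟨kf (r • x.1) (r • x).2, step_k _ _ (hkf _ _)⟩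
          (r • ⟨kf x.1 x.2, step_k _ _ (hkf _ _)⟩) h
        simpa [Submodule.Quotient.mk_smul] using this }
  have hker : LinearMap.ker φ =
      (LinearMap.range g₀).comap (LinearMap.ker h₀).subtype := by
    ext c
    constructor
    · intro hc
      have h0 : (⟨kf c.1 c.2, step_k _ _ (hkf c.1 c.2)⟩ : LinearMap.ker κ₃) ∈ N₂ :=
        (Submodule.Quotient.mk_eq_zero N₂).mp hc
      exact step_mem c.1 _ _ _ (hbf _ _) (haf _ _) (hkf _ _) h0
    · intro hc
      obtain ⟨b₀, hb₀⟩ := hc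
      have hββ : β₁ (β₀ b₀) = 0 := by
        have : β₀ b₀ ∈ LinearMap.ker β₁ := hcolB₁ ▸ ⟨b₀, rfl⟩
        exact LinearMap.mem_ker.mp this
      have h := indep c.1 (kf c.1 c.2) 0 (bf c.1 c.2) (β₀ b₀)
        (af c.1 c.2) 0 (hbf _ _) (haf _ _) (hkf _ _)
        (by rw [sq₁, hb₀]; rfl) (by rw [map_zero, hββ]) (by rw [map_zero, map_zero])
      have : φ c = Submodule.Quotient.mk 0 :=
        mk_eq _ 0 (by simpa using h)
      simpa [LinearMap.mem_ker] using this
  have hsurj : Function.Surjective φ := by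
    intro y
    obtain ⟨⟨k, hkk⟩, rfl⟩ := Submodule.Quotient.mk_surjective N₂ y
    obtain ⟨c, b, a, hc0, hb, ha, hk⟩ := step_surj k (LinearMap.mem_ker.mp hkk)
    refine ⟨⟨c, LinearMap.mem_ker.mpr hc0⟩, ?_⟩
    exact mk_eq _ _ (indep c _ _ _ _ _ _ (hbf _ _) (haf _ _) (hkf _ _) hb ha hk)
  exact ⟨(Submodule.quotEquivOfEq _ _ hker.symm).trans
    (φ.quotKerEquivOfSurjective hsurj)⟩
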